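/- For any density matrix ρ on ℂ^d, the geometric measure of texture is bounded below by the squared trace distance to the textureless state: T_g(ρ) ≥ [D(ρ, f₁)]². -/

import Mathlib

open Matrix BigOperators Finset ComplexOrder

noncomputable section

abbrev Mat (d : ℕ) := Matrix (Fin d) (Fin d) ℂ

def IsDensity {d : ℕ} (ρ : Mat d) : Prop := ρ.PosSemidef ∧ ρ.trace = 1

def outer {d : ℕ} (ψ : Fin d → ℂ) : Mat d := Matrix.vecMulVec ψ (star ψ)

def f1vec (d : ℕ) : Fin d → ℂ := fun _ => ((Real.sqrt d)⁻¹ : ℝ)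

def f1 (d : ℕ) : Mat d := outer (f1vec d)

/-- The old Mathlib `Matrix.PosSemidef.sqrt`, removed since, spelled out with its old definition. -/
noncomputable def PosSemidefSqrt {n : Type*} [Fintype n] [DecidableEq n] {A : Matrix n n ℂ}
    (hA : A.PosSemidef) : Matrix n n ℂ :=
  hA.1.eigenvectorUnitary.1 * diagonal ((↑) ∘ (√·) ∘ hA.1.eigenvalues) *
  (star hA.1.eigenvectorUnitary : Matrix n n ℂ)

noncomputable def traceNorm {d : ℕ} (A : Mat d) : ℝ :=
  (PosSemidefSqrt (Matrix.posSemidef_conjTranspose_mul_self A)).trace.re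

noncomputable def Ttr {d : ℕ} (ρ : Mat d) : ℝ := (1/2) * traceNorm (ρ - f1 d)

noncomputable def fidF1 {d : ℕ} (ρ : Mat d) : ℝ := (star (f1vec d) ⬝ᵥ (ρ *ᵥ f1vec d)).re

noncomputable def TF {d : ℕ} (ρ : Mat d) : ℝ := 1 - fidF1 ρ

noncomputable def TB {d : ℕ} (ρ : Mat d) : ℝ := 2 * (1 - Real.sqrt (fidF1 ρ))

noncomputable def Tg {d : ℕ} (ρ : Mat d) : ℝ :=
  sInf { x | ∃ (n : ℕ) (p : Fin n → ℝ) (ψ : Fin n → (Fin d → ℂ)),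
    (∀ i, 0 ≤ p i) ∧ (∑ i, p i = 1) ∧ (∀ i, star (ψ i) ⬝ᵥ ψ i = 1) ∧
    ρ = ∑ i, (p i : ℂ) • outer (ψ i) ∧
    x = ∑ i, p i * (1 - ‖star (f1vec d) ⬝ᵥ ψ i‖^2) }

namespace AuxTg
variable {d : ℕ}

def cdiag (a : Fin d → ℝ) : Mat d := Matrix.diagonal (fun i => (a i : ℂ))

def uconj (U : Mat d) (a : Fin d → ℝ) : Mat d := U * cdiag a * Uᴴ

lemma cdiag_mul_cdiag (a b : Fin d → ℝ) : cdiag a * cdiag b = cdiag (a * b) := by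
  ext i j
  by_cases h : i = j <;> simp [cdiag, Matrix.diagonal_apply, h, Pi.mul_apply]

lemma uconj_mul (U : Mat d) (hU : Uᴴ * U = 1) (a b : Fin d → ℝ) :
    uconj U a * uconj U b = uconj U (a * b) := by
  calc U * cdiag a * Uᴴ * (U * cdiag b * Uᴴ)
      = U * cdiag a * (Uᴴ * U) * cdiag b * Uᴴ := by
        simp only [mul_assoc]
    _ = U * cdiag (a*b) * Uᴴ := by
        rw [hU, mul_one, mul_assoc, mul_assoc, ← mul_assoc (cdiag a), cdiag_mul_cdiag, mul_assoc]

lemma trace_uconj (U : Mat d) (hU : Uᴴ * U = 1) (a : Fin d → ℝ) :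
    (uconj U a).trace = ((∑ i, a i : ℝ) : ℂ) := by
  unfold uconj
  rw [Matrix.trace_mul_cycle, hU, one_mul, cdiag, trace_diagonal]
  push_cast; ring

lemma isHermitian_uconj (U : Mat d) (a : Fin d → ℝ) : (uconj U a).IsHermitian := by
  unfold Matrix.IsHermitian uconj
  simp [conjTranspose_mul, mul_assoc, cdiag, diagonal_conjTranspose]
  congr 1
  ext i
  simp

lemma posSemidef_uconj (U : Mat d) (a : Fin d → ℝ) (ha : ∀ i, 0 ≤ a i) :
    (uconj U a).PosSemidef := by
  unfold uconj
  exact (Matrix.posSemidef_diagonal_iff.mpr (fun i => by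
    exact_mod_cast (ha i))).mul_mul_conjTranspose_same U

lemma uconj_inj (U : Mat d) (hU : Uᴴ * U = 1) (a b : Fin d → ℝ)
    (h : uconj U a = uconj U b) : a = b := by
  have h2 : cdiag a = cdiag b := by
    have h3 := congrArg (fun M => Uᴴ * M * U) h
    simp only [uconj, ← mul_assoc] at h3
    rw [hU] at h3
    simp only [one_mul] at h3
    rw [mul_assoc, mul_assoc, hU, mul_one, mul_one] at h3
    exact h3
  funext i
  have h3 : cdiag a i i = cdiag b i i := by rw [h2]
  simpa [cdiag, Matrix.diagonal_apply] using h3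

lemma uconj_smul (U : Mat d) (r : ℝ) (a : Fin d → ℝ) :
    ((r : ℂ)) • uconj U a = uconj U (r • a) := by
  unfold uconj
  rw [← smul_mul_assoc, ← mul_smul_comm]
  congr 1
  ext i j
  by_cases h : i = j <;> simp [cdiag, Matrix.diagonal_apply, h] <;> ring

/-- spectral theorem in uconj form -/
lemma spectral (A : Mat d) (hA : A.IsHermitian) :
    A = uconj (hA.eigenvectorUnitary : Mat d) hA.eigenvalues := by
  conv_lhs => rw [hA.spectral_theorem]
  rw [Unitary.conjStarAlgAut_apply]
  rw [uconj, star_eq_conjTranspose]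
  rfl

lemma eigenvectorUnitary_l (A : Mat d) (hA : A.IsHermitian) :
    ((hA.eigenvectorUnitary : Mat d))ᴴ * (hA.eigenvectorUnitary : Mat d) = 1 := by
  rw [← star_eq_conjTranspose]
  exact Matrix.mem_unitaryGroup_iff'.mp hA.eigenvectorUnitary.2

lemma eigenvectorUnitary_r (A : Mat d) (hA : A.IsHermitian) :
    (hA.eigenvectorUnitary : Mat d) * ((hA.eigenvectorUnitary : Mat d))ᴴ = 1 := by
  rw [← star_eq_conjTranspose]
  exact Matrix.mem_unitaryGroup_iff.mp hA.eigenvectorUnitary.2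

open scoped MatrixOrder in
lemma cfc_sqrt_eq (X S : Mat d) (hS : S.PosSemidef) (hX : X.PosSemidef) (h : S * S = X) :
    cfc Real.sqrt X = S := by
  rw [← cfcₙ_eq_cfc, ← CFC.sqrt_eq_real_sqrt X hX.nonneg]
  exact CFC.sqrt_unique h hS.nonneg

/-- trace norm of Hermitian matrix as sum of abs of eigenvalues -/
lemma traceNorm_hermitian (A : Mat d) (hA : A.IsHermitian) :
    traceNorm A = ∑ i, |hA.eigenvalues i| := by
  set U := (hA.eigenvectorUnitary : Mat d) with hUdef
  have hU := eigenvectorUnitary_l A hA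
  set μ := hA.eigenvalues
  set S := uconj U (fun i => |μ i|) with hS
  have hSpsd : S.PosSemidef := posSemidef_uconj U _ (fun i => abs_nonneg _)
  have hsq : S ^ 2 = Aᴴ * A := by
    rw [hA.eq, pow_two, hS, uconj_mul U hU]
    conv_rhs => rw [spectral A hA, uconj_mul U hU]
    have : (fun i => |μ i|) * (fun i => |μ i|) = μ * μ := by
      funext i; simp [Pi.mul_apply, abs_mul_abs_self]
    rw [this]
  have : S = PosSemidefSqrt (Matrix.posSemidef_conjTranspose_mul_self A) := by
    have h1 := (Matrix.posSemidef_conjTranspose_mul_self A).1.cfc_eq Real.sqrt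
    rw [IsHermitian.cfc, Unitary.conjStarAlgAut_apply] at h1
    have h2 : PosSemidefSqrt (Matrix.posSemidef_conjTranspose_mul_self A)
        = cfc Real.sqrt (Aᴴ * A) := by rw [h1]; rfl
    rw [h2]
    exact (cfc_sqrt_eq _ S hSpsd (Matrix.posSemidef_conjTranspose_mul_self A) (by rw [← pow_two, hsq])).symm
  rw [traceNorm, ← this, trace_uconj U hU]
  exact Complex.ofReal_re _

lemma vmv_mul_vmv (a b c e : Fin d → ℂ) :
    vecMulVec a b * vecMulVec c e = (b ⬝ᵥ c) • vecMulVec a e := by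
  ext i j
  simp only [mul_apply, vecMulVec_apply, Matrix.smul_apply, smul_eq_mul, dotProduct]
  rw [Finset.sum_mul]
  exact Finset.sum_congr rfl fun k _ => by ring

lemma trace_vmv (a b : Fin d → ℂ) : (vecMulVec a b).trace = a ⬝ᵥ b := by
  simp [Matrix.trace, Matrix.diag, vecMulVec_apply, dotProduct]

lemma outer_isHermitian (ψ : Fin d → ℂ) : (outer ψ).IsHermitian := by
  ext i j
  simp [outer, conjTranspose_apply, vecMulVec_apply, mul_comm]

lemma f1vec_norm (hd : 0 < d) : star (f1vec d) ⬝ᵥ f1vec d = 1 := by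
  have hd' : (0:ℝ) < d := by exact_mod_cast hd
  have key : (d : ℝ) * ((Real.sqrt d)⁻¹ * (Real.sqrt d)⁻¹) = 1 := by
    rw [← mul_inv, Real.mul_self_sqrt hd'.le]
    field_simp
  simp only [dotProduct, f1vec, Pi.star_apply, Complex.star_def, Complex.conj_ofReal,
    Finset.sum_const, Finset.card_univ, Fintype.card_fin, nsmul_eq_mul]
  push_cast
  exact_mod_cast congrArg (Complex.ofReal) key

lemma star_dot (a b : Fin d → ℂ) : star (star a ⬝ᵥ b) = star b ⬝ᵥ a := by
  simp [dotProduct, star_sum, mul_comm]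

lemma pure_cube (ψ φ : Fin d → ℂ) (hψ : star ψ ⬝ᵥ ψ = 1) (hφ : star φ ⬝ᵥ φ = 1) :
    (outer ψ - outer φ) * (outer ψ - outer φ) * (outer ψ - outer φ)
      = ((1 - ‖star φ ⬝ᵥ ψ‖ ^ 2 : ℝ) : ℂ) • (outer ψ - outer φ) := by
  set c := star φ ⬝ᵥ ψ with hc
  have hcs : star ψ ⬝ᵥ φ = star c := (star_dot φ ψ).symm
  set P := outer ψ with hP
  set Q := outer φ with hQ
  set R := vecMulVec ψ (star φ) with hR
  set R' := vecMulVec φ (star ψ) with hR'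
  have hPP : P * P = P := by rw [hP, outer, vmv_mul_vmv, hψ, one_smul]
  have hQQ : Q * Q = Q := by rw [hQ, outer, vmv_mul_vmv, hφ, one_smul]
  have hPQ : P * Q = star c • R := by rw [hP, hQ, outer, outer, vmv_mul_vmv, hcs, hR]
  have hQP : Q * P = c • R' := by rw [hP, hQ, outer, outer, vmv_mul_vmv, ← hc, hR']
  have hRP : R * P = c • P := by rw [hR, hP, outer, vmv_mul_vmv, ← hc]
  have hRQ : R * Q = R := by rw [hR, hQ, outer, vmv_mul_vmv, hφ, one_smul]
  have hR'P : R' * P = R' := by rw [hR', hP, outer, vmv_mul_vmv, hψ, one_smul]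
  have hR'Q : R' * Q = star c • Q := by rw [hR', hQ, outer, vmv_mul_vmv, hcs]
  have hsc : star c * c = ((‖c‖ ^ 2 : ℝ) : ℂ) := by
    rw [Complex.star_def, mul_comm, Complex.mul_conj, Complex.normSq_eq_norm_sq]
  have hA2 : (P - Q) * (P - Q) = P + Q - (star c • R + c • R') := by
    rw [sub_mul, mul_sub, mul_sub, hPP, hQQ, hPQ, hQP]
    abel
  rw [hA2]
  simp only [sub_mul, add_mul, smul_mul_assoc, mul_sub, hPP, hQQ, hPQ, hQP, hRP, hRQ, hR'P,
    hR'Q, smul_sub, smul_smul, hsc, mul_comm c (star c)]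
  push_cast
  module

lemma pure_sq_trace (ψ φ : Fin d → ℂ) (hψ : star ψ ⬝ᵥ ψ = 1) (hφ : star φ ⬝ᵥ φ = 1) :
    ((outer ψ - outer φ) * (outer ψ - outer φ)).trace
      = ((2 * (1 - ‖star φ ⬝ᵥ ψ‖ ^ 2) : ℝ) : ℂ) := by
  set c := star φ ⬝ᵥ ψ with hc
  have hcs : star ψ ⬝ᵥ φ = star c := (star_dot φ ψ).symm
  have hPQ : outer ψ * outer φ = star c • vecMulVec ψ (star φ) := by
    rw [outer, outer, vmv_mul_vmv, hcs]
  have hQP : outer φ * outer ψ = c • vecMulVec φ (star ψ) := by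
    rw [outer, outer, vmv_mul_vmv, ← hc]
  have hPP : outer ψ * outer ψ = outer ψ := by rw [outer, vmv_mul_vmv, hψ, one_smul]
  have hQQ : outer φ * outer φ = outer φ := by rw [outer, vmv_mul_vmv, hφ, one_smul]
  have h2 : (outer ψ - outer φ) * (outer ψ - outer φ)
      = outer ψ + outer φ - (star c • vecMulVec ψ (star φ) + c • vecMulVec φ (star ψ)) := by
    rw [sub_mul, mul_sub, mul_sub, hPP, hQQ, hPQ, hQP]; abel
  rw [h2, trace_sub, trace_add, trace_add, trace_smul, trace_smul, outer, outer,
    trace_vmv, trace_vmv, trace_vmv, trace_vmv]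
  have h3 : ψ ⬝ᵥ star ψ = 1 := by rw [dotProduct_comm]; exact hψ
  have h4 : φ ⬝ᵥ star φ = 1 := by rw [dotProduct_comm]; exact hφ
  have h5 : ψ ⬝ᵥ star φ = c := by rw [dotProduct_comm]
  have h6 : φ ⬝ᵥ star ψ = star c := by rw [dotProduct_comm]; exact hcs
  rw [h3, h4, h5, h6, smul_eq_mul, smul_eq_mul]
  have hsc : star c * c = ((‖c‖ ^ 2 : ℝ) : ℂ) := by
    rw [Complex.star_def, mul_comm, Complex.mul_conj, Complex.normSq_eq_norm_sq]
  rw [mul_comm c (star c), hsc]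
  push_cast
  ring

lemma traceNorm_pure (hd : 0 < d) (ψ : Fin d → ℂ) (hψ : star ψ ⬝ᵥ ψ = 1) :
    0 ≤ 1 - ‖star (f1vec d) ⬝ᵥ ψ‖ ^ 2 ∧
    traceNorm (outer ψ - f1 d)
      = 2 * Real.sqrt (1 - ‖star (f1vec d) ⬝ᵥ ψ‖ ^ 2) := by
  set t := 1 - ‖star (f1vec d) ⬝ᵥ ψ‖ ^ 2 with ht
  have hφ := f1vec_norm hd
  set A := outer ψ - f1 d with hA
  have hAH : A.IsHermitian := (outer_isHermitian ψ).sub (outer_isHermitian (f1vec d))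
  set U := (hAH.eigenvectorUnitary : Mat d) with hUdef
  have hUl := eigenvectorUnitary_l A hAH
  set μ := hAH.eigenvalues with hμ
  have hspec : A = uconj U μ := spectral A hAH
  have hcube' : A * A * A = ((t : ℝ) : ℂ) • A := by
    rw [hA]
    exact pure_cube ψ (f1vec d) hψ hφ
  have hcube : ∀ i, μ i ^ 3 = t * μ i := by
    have h1 : uconj U (μ * μ * μ) = uconj U (t • μ) := by
      rw [← uconj_mul U hUl, ← uconj_mul U hUl, ← hspec, ← uconj_smul, ← hspec, hcube']
    have h2 := uconj_inj U hUl _ _ h1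
    intro i
    have h3 := congrFun h2 i
    simp only [Pi.mul_apply, Pi.smul_apply, smul_eq_mul] at h3
    rw [pow_succ, pow_two]
    exact h3
  have htr : ∑ i, μ i ^ 2 = 2 * t := by
    have h1 : (A * A).trace = ((∑ i, (μ * μ) i : ℝ) : ℂ) := by
      conv_lhs => rw [hspec, uconj_mul U hUl]
      exact trace_uconj U hUl _
    have h2 : (A * A).trace = ((2 * t : ℝ) : ℂ) := by
      rw [hA]
      exact pure_sq_trace ψ (f1vec d) hψ hφ
    have h3 : (∑ i, (μ * μ) i : ℝ) = 2 * t := Complex.ofReal_inj.mp (h1.symm.trans h2)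
    rw [← h3]
    exact Finset.sum_congr rfl fun i _ => by rw [pow_two, Pi.mul_apply]
  have ht0 : 0 ≤ t := by
    have h4 : (0:ℝ) ≤ ∑ i, μ i ^ 2 := Finset.sum_nonneg fun i _ => sq_nonneg _
    linarith [htr ▸ h4]
  refine ⟨ht0, ?_⟩
  rw [traceNorm_hermitian A hAH]
  rcases eq_or_lt_of_le ht0 with h0 | hpos
  · have hz : ∀ i, μ i = 0 := by
      intro i
      have h5 := hcube i
      rw [← h0, zero_mul] at h5
      exact pow_eq_zero_iff (three_ne_zero) |>.mp h5
    simp [← hμ, hz, ← h0]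
  · have heach : ∀ i, |μ i| = μ i ^ 2 / Real.sqrt t := by
      intro i
      rcases eq_or_ne (μ i) 0 with hz | hz
      · simp [hz]
      · have hsq : μ i ^ 2 = t := by
          have h3 := hcube i
          rw [pow_succ] at h3
          exact mul_right_cancel₀ hz h3
        rw [← Real.sqrt_sq_eq_abs, hsq, Real.div_sqrt]
    calc ∑ i, |hAH.eigenvalues i| = ∑ i, μ i ^ 2 / Real.sqrt t :=
          Finset.sum_congr rfl fun i _ => heach i
      _ = (∑ i, μ i ^ 2) / Real.sqrt t := by rw [Finset.sum_div]
      _ = 2 * (t / Real.sqrt t) := by rw [htr, mul_div_assoc]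
      _ = 2 * Real.sqrt t := by rw [Real.div_sqrt]

lemma trace_cdiag_mul (a : Fin d → ℝ) (E : Mat d) :
    (cdiag a * E).trace = ∑ i, (a i : ℂ) * E i i := by
  simp [Matrix.trace, Matrix.diag, cdiag, Matrix.diagonal_mul]

lemma dual_bound (U W : Mat d) (hUr : U * Uᴴ = 1) (hWl : Wᴴ * W = 1)
    (a b : Fin d → ℝ) (ha : ∀ i, |a i| ≤ 1) :
    (uconj U a * uconj W b).trace.re ≤ ∑ j, |b j| := by
  set N := Uᴴ * W with hN
  have hNN : Nᴴ * N = 1 := by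
    rw [hN, conjTranspose_mul, conjTranspose_conjTranspose]
    calc Wᴴ * U * (Uᴴ * W) = Wᴴ * (U * Uᴴ) * W := by simp only [mul_assoc]
      _ = 1 := by rw [hUr, mul_one, hWl]
  have hcol : ∀ j, ∑ i, Complex.normSq (N i j) = 1 := by
    intro j
    have h1 : (Nᴴ * N) j j = 1 := by rw [hNN]; simp
    rw [mul_apply] at h1
    have h2 : ∑ i, ((Complex.normSq (N i j) : ℝ) : ℂ) = 1 := by
      rw [← h1]
      refine Finset.sum_congr rfl fun i _ => ?_
      rw [conjTranspose_apply, Complex.star_def, mul_comm, Complex.mul_conj]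
    have h3 := congrArg Complex.re h2
    simpa using h3
  have e3 : ∀ i, (N * cdiag b * Nᴴ) i i = ∑ j, (b j : ℂ) * ((Complex.normSq (N i j) : ℝ) : ℂ) := by
    intro i
    rw [mul_apply]
    refine Finset.sum_congr rfl fun j _ => ?_
    rw [cdiag, mul_diagonal, conjTranspose_apply, Complex.star_def]
    rw [show N i j * (b j : ℂ) * (starRingEnd ℂ) (N i j)
        = (b j : ℂ) * (N i j * (starRingEnd ℂ) (N i j)) from by ring, Complex.mul_conj]
  have e1 : (uconj U a * uconj W b).trace = (cdiag a * (N * cdiag b * Nᴴ)).trace := by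
    rw [uconj, uconj]
    calc (U * cdiag a * Uᴴ * (W * cdiag b * Wᴴ)).trace
        = (U * (cdiag a * (Uᴴ * (W * (cdiag b * Wᴴ))))).trace := by simp only [mul_assoc]
      _ = ((cdiag a * (Uᴴ * (W * (cdiag b * Wᴴ)))) * U).trace := trace_mul_comm _ _
      _ = (cdiag a * (N * cdiag b * Nᴴ)).trace := by
          rw [hN, conjTranspose_mul, conjTranspose_conjTranspose]
          simp only [mul_assoc]
  have e2 : (uconj U a * uconj W b).trace
      = ((∑ i, a i * ∑ j, b j * Complex.normSq (N i j) : ℝ) : ℂ) := by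
    rw [e1, trace_cdiag_mul]
    push_cast
    exact Finset.sum_congr rfl fun i _ => by rw [e3 i]
  rw [e2, Complex.ofReal_re]
  calc ∑ i, a i * ∑ j, b j * Complex.normSq (N i j)
      ≤ ∑ i, ∑ j, |b j| * Complex.normSq (N i j) := by
        refine Finset.sum_le_sum fun i _ => ?_
        calc a i * ∑ j, b j * Complex.normSq (N i j)
            ≤ |a i * ∑ j, b j * Complex.normSq (N i j)| := le_abs_self _
          _ = |a i| * |∑ j, b j * Complex.normSq (N i j)| := abs_mul _ _
          _ ≤ 1 * |∑ j, b j * Complex.normSq (N i j)| := by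
              exact mul_le_mul_of_nonneg_right (ha i) (abs_nonneg _)
          _ = |∑ j, b j * Complex.normSq (N i j)| := one_mul _
          _ ≤ ∑ j, |b j * Complex.normSq (N i j)| := Finset.abs_sum_le_sum_abs _ _
          _ = ∑ j, |b j| * Complex.normSq (N i j) := by
              refine Finset.sum_congr rfl fun j _ => ?_
              rw [abs_mul, abs_of_nonneg (Complex.normSq_nonneg _)]
    _ = ∑ j, |b j| * ∑ i, Complex.normSq (N i j) := by
        rw [Finset.sum_comm]
        exact Finset.sum_congr rfl fun j _ => by rw [Finset.mul_sum]
    _ = ∑ j, |b j| := by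
        refine Finset.sum_congr rfl fun j _ => ?_
        rw [hcol j, mul_one]

lemma uconj_eq_sum (U : Mat d) (a : Fin d → ℝ) :
    uconj U a = ∑ i, (a i : ℂ) • outer (fun j => U j i) := by
  ext j k
  rw [Matrix.sum_apply]
  rw [uconj, mul_apply]
  refine Finset.sum_congr rfl fun l _ => ?_
  rw [cdiag, mul_diagonal, conjTranspose_apply, Matrix.smul_apply, outer,
    vecMulVec_apply, Pi.star_apply, smul_eq_mul, Complex.star_def]
  ring

lemma column_norm (U : Mat d) (hUl : Uᴴ * U = 1) (i : Fin d) :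
    star (fun j => U j i) ⬝ᵥ (fun j => U j i) = 1 := by
  have h1 : (Uᴴ * U) i i = 1 := by rw [hUl]; simp
  rw [mul_apply] at h1
  rw [← h1]
  refine Finset.sum_congr rfl fun j _ => ?_
  rw [conjTranspose_apply, Pi.star_apply]

end AuxTg

theorem stmt6 (d : ℕ) (hd : 0 < d) (ρ : Mat d) (hρ : IsDensity ρ) :
    Tg ρ ≥ (Ttr ρ)^2 := by
  have hρH : ρ.IsHermitian := hρ.1.1
  rw [ge_iff_le, Tg]
  -- nonemptiness of the decomposition set
  have hne : { x | ∃ (n : ℕ) (p : Fin n → ℝ) (ψ : Fin n → (Fin d → ℂ)),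
      (∀ i, 0 ≤ p i) ∧ (∑ i, p i = 1) ∧ (∀ i, star (ψ i) ⬝ᵥ ψ i = 1) ∧
      ρ = ∑ i, (p i : ℂ) • outer (ψ i) ∧
      x = ∑ i, p i * (1 - ‖star (f1vec d) ⬝ᵥ ψ i‖^2) }.Nonempty := by
    set U := (hρH.eigenvectorUnitary : Mat d) with hU
    have hUl := AuxTg.eigenvectorUnitary_l ρ hρH
    set pρ := hρH.eigenvalues with hpρ
    set ψs : Fin d → (Fin d → ℂ) := fun i => (fun j => U j i) with hψs
    have hdec : ρ = ∑ i, (pρ i : ℂ) • outer (ψs i) := by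
      conv_lhs => rw [AuxTg.spectral ρ hρH]
      rw [AuxTg.uconj_eq_sum]
    have hsum : ∑ i, pρ i = 1 := by
      have h1 : ρ.trace = ((∑ i, pρ i : ℝ) : ℂ) := by
        conv_lhs => rw [AuxTg.spectral ρ hρH]
        exact AuxTg.trace_uconj U hUl pρ
      rw [hρ.2] at h1
      exact_mod_cast h1.symm
    exact ⟨_, d, pρ, ψs, fun i => hρ.1.eigenvalues_nonneg i, hsum,
      fun i => AuxTg.column_norm U hUl i, hdec, rfl⟩
  refine le_csInf hne ?_
  rintro x ⟨n, p, ψ, hp0, hp1, hψn, hdec, hxeq⟩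
  set t : Fin n → ℝ := fun i => 1 - ‖star (f1vec d) ⬝ᵥ ψ i‖^2 with htdef
  have hpure : ∀ i, 0 ≤ t i ∧ traceNorm (outer (ψ i) - f1 d) = 2 * Real.sqrt (t i) :=
    fun i => AuxTg.traceNorm_pure hd (ψ i) (hψn i)
  -- setup for B = ρ - f1 d
  set B := ρ - f1 d with hB
  have hBH : B.IsHermitian :=
    (hρH.sub (AuxTg.outer_isHermitian (f1vec d)))
  set U := (hBH.eigenvectorUnitary : Mat d) with hU
  have hUl := AuxTg.eigenvectorUnitary_l B hBH
  have hUr := AuxTg.eigenvectorUnitary_r B hBH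
  set μ := hBH.eigenvalues with hμ
  set sg : Fin d → ℝ := fun i => if μ i < 0 then -1 else 1 with hsg
  have hs1 : ∀ i, |sg i| ≤ 1 := by
    intro i; rw [hsg]; dsimp only; split <;> simp
  have hsμ : sg * μ = fun i => |μ i| := by
    funext i
    rw [Pi.mul_apply, hsg]; dsimp only
    split
    · rename_i h; rw [abs_of_neg h]; ring
    · rename_i h; rw [abs_of_nonneg (not_lt.mp h)]; ring
  set M := AuxTg.uconj U sg with hM
  have step1 : traceNorm B = (M * B).trace.re := by
    have h1 : M * B = AuxTg.uconj U (sg * μ) := by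
      conv_lhs => rw [AuxTg.spectral B hBH]
      exact AuxTg.uconj_mul U hUl sg μ
    rw [h1, AuxTg.trace_uconj U hUl, Complex.ofReal_re, hsμ, AuxTg.traceNorm_hermitian B hBH]
  have hsumC : (∑ i, (p i : ℂ)) = 1 := by exact_mod_cast hp1
  have step2 : B = ∑ i, (p i : ℂ) • (outer (ψ i) - f1 d) := by
    rw [hB]
    conv_lhs => rw [hdec]
    rw [Finset.sum_congr rfl (fun i _ => smul_sub ((p i : ℂ)) (outer (ψ i)) (f1 d)),
      Finset.sum_sub_distrib, ← Finset.sum_smul, hsumC, one_smul]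
  have step3 : (M * B).trace.re = ∑ i, p i * (M * (outer (ψ i) - f1 d)).trace.re := by
    rw [step2, Finset.mul_sum, trace_sum, Complex.re_sum]
    refine Finset.sum_congr rfl fun i _ => ?_
    rw [mul_smul_comm, trace_smul, smul_eq_mul]
    simp [Complex.mul_re]
  have step4 : ∀ i, (M * (outer (ψ i) - f1 d)).trace.re ≤ 2 * Real.sqrt (t i) := by
    intro i
    set C := outer (ψ i) - f1 d with hC
    have hCH : C.IsHermitian :=
      (AuxTg.outer_isHermitian (ψ i)).sub (AuxTg.outer_isHermitian (f1vec d))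
    have hWl := AuxTg.eigenvectorUnitary_l C hCH
    have h1 : (M * C).trace.re ≤ ∑ j, |hCH.eigenvalues j| := by
      have h2 : M * C = AuxTg.uconj U sg * AuxTg.uconj (hCH.eigenvectorUnitary : Mat d) hCH.eigenvalues := by
        rw [hM]
        conv_lhs => rw [AuxTg.spectral C hCH]
      rw [h2]
      exact AuxTg.dual_bound U (hCH.eigenvectorUnitary : Mat d) hUr hWl sg hCH.eigenvalues hs1
    calc (M * C).trace.re ≤ ∑ j, |hCH.eigenvalues j| := h1
      _ = traceNorm C := (AuxTg.traceNorm_hermitian C hCH).symm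
      _ = 2 * Real.sqrt (t i) := (hpure i).2
  have hTN : traceNorm B ≤ ∑ i, p i * (2 * Real.sqrt (t i)) := by
    rw [step1, step3]
    exact Finset.sum_le_sum fun i _ =>
      mul_le_mul_of_nonneg_left (step4 i) (hp0 i)
  have hTtr : Ttr ρ ≤ ∑ i, p i * Real.sqrt (t i) := by
    rw [Ttr, ← hB]
    calc (1/2) * traceNorm B ≤ (1/2) * ∑ i, p i * (2 * Real.sqrt (t i)) := by
          exact mul_le_mul_of_nonneg_left hTN (by norm_num)
      _ = ∑ i, p i * Real.sqrt (t i) := by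
          rw [Finset.mul_sum]
          exact Finset.sum_congr rfl fun i _ => by ring
  have hTtr0 : 0 ≤ Ttr ρ := by
    rw [Ttr, ← hB]
    have : 0 ≤ traceNorm B := by
      rw [AuxTg.traceNorm_hermitian B hBH]
      exact Finset.sum_nonneg fun i _ => abs_nonneg _
    linarith
  have hCS : (∑ i, p i * Real.sqrt (t i)) ^ 2 ≤ ∑ i, p i * t i := by
    have h1 : ∀ i, p i * Real.sqrt (t i) = Real.sqrt (p i) * (Real.sqrt (p i) * Real.sqrt (t i)) := by
      intro i
      rw [← mul_assoc, Real.mul_self_sqrt (hp0 i)]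
    calc (∑ i, p i * Real.sqrt (t i)) ^ 2
        = (∑ i, Real.sqrt (p i) * (Real.sqrt (p i) * Real.sqrt (t i))) ^ 2 := by
          rw [Finset.sum_congr rfl fun i _ => h1 i]
      _ ≤ (∑ i, Real.sqrt (p i) ^ 2) * ∑ i, (Real.sqrt (p i) * Real.sqrt (t i)) ^ 2 :=
          sum_mul_sq_le_sq_mul_sq univ _ _
      _ = (∑ i, p i) * ∑ i, p i * t i := by
          congr 1
          · exact Finset.sum_congr rfl fun i _ => Real.sq_sqrt (hp0 i)
          · refine Finset.sum_congr rfl fun i _ => ?_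
            rw [mul_pow, Real.sq_sqrt (hp0 i), Real.sq_sqrt (hpure i).1]
      _ = ∑ i, p i * t i := by rw [hp1, one_mul]
  calc (Ttr ρ) ^ 2 ≤ (∑ i, p i * Real.sqrt (t i)) ^ 2 := pow_le_pow_left₀ hTtr0 hTtr 2
    _ ≤ ∑ i, p i * t i := hCS
    _ = x := hxeq.symm
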